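/- Logarithmic cosine inequality: for every real number x with -π < x < π, one has Real.log ((Real.cos (x/2))^2) ≤ -x²/4. Equivalently, the function f(x) = log(cos²(x/2)) + x²/4 is nonpositive on the open interval (-π, π), attaining its maximum value 0 uniquely at x = 0. -/

import Mathlib

open Real

lemma log_cos_aux {t : ℝ} (h0 : 0 ≤ t) (h1 : t < Real.pi / 2) :
    Real.log (Real.cos t) + t ^ 2 / 2 ≤ 0 := by
  set f : ℝ → ℝ := fun s => Real.log (Real.cos s) + s ^ 2 / 2 with hf
  have hcos : ∀ s ∈ Set.Icc (0:ℝ) t, 0 < Real.cos s := fun s hs =>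
    Real.cos_pos_of_mem_Ioo ⟨by linarith [hs.1, Real.pi_pos], lt_of_le_of_lt hs.2 h1⟩
  have hderiv : ∀ s ∈ Set.Icc (0:ℝ) t, HasDerivAt f (-Real.tan s + s) s := by
    intro s hs
    have hc := hcos s hs
    have h1 : HasDerivAt Real.cos (-Real.sin s) s := Real.hasDerivAt_cos s
    have h2 : HasDerivAt (fun s => Real.log (Real.cos s)) (-Real.sin s / Real.cos s) s := by
      have := (Real.hasDerivAt_log hc.ne').comp s h1
      simpa [Function.comp_def, div_eq_inv_mul] using this
    have h3 : HasDerivAt (fun s : ℝ => s ^ 2 / 2) s s := by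
      simpa using ((hasDerivAt_pow 2 s).div_const 2)
    have := h2.add h3
    simpa [Real.tan_eq_sin_div_cos, neg_div, hf, Pi.add_def] using this
  have hanti : AntitoneOn f (Set.Icc 0 t) := by
    apply antitoneOn_of_deriv_nonpos (convex_Icc 0 t)
    · exact fun s hs => ((hderiv s hs).continuousAt).continuousWithinAt
    · intro s hs
      rw [interior_Icc] at hs
      exact ((hderiv s ⟨hs.1.le, hs.2.le⟩).differentiableAt).differentiableWithinAt
    · intro s hs
      rw [interior_Icc] at hs
      rw [(hderiv s ⟨hs.1.le, hs.2.le⟩).deriv]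
      have := Real.lt_tan hs.1 (lt_trans hs.2 h1)
      linarith
  have := hanti (Set.left_mem_Icc.2 h0) (Set.right_mem_Icc.2 h0) h0
  simpa [hf] using this

theorem log_cos_sq_le (x : ℝ) (hx1 : -Real.pi < x) (hx2 : x < Real.pi) :
    Real.log ((Real.cos (x / 2)) ^ 2) ≤ -x ^ 2 / 4 := by
  have h0 : 0 ≤ |x| / 2 := by positivity
  have h1 : |x| / 2 < Real.pi / 2 := by
    rw [div_lt_div_iff_of_pos_right (by norm_num), abs_lt]; exact ⟨hx1, hx2⟩
  have key := log_cos_aux h0 h1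
  have hcoseq : Real.cos (x / 2) = Real.cos (|x| / 2) := by
    rcases abs_cases x with ⟨h, _⟩ | ⟨h, _⟩
    · rw [h]
    · rw [h]; simp [neg_div, Real.cos_neg]
  have hcpos : 0 < Real.cos (|x| / 2) :=
    Real.cos_pos_of_mem_Ioo ⟨by linarith [Real.pi_pos], h1⟩
  rw [hcoseq, Real.log_pow]
  have : (|x| / 2) ^ 2 = x ^ 2 / 4 := by
    rw [div_pow, sq_abs]; norm_num
  rw [this] at key
  push_cast
  linarith
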